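/- Let d ≥ 1 and let I : C²_b(ℝ^d) → C_b(ℝ^d) be Lipschitz with constant K₀ and satisfy the global comparison property. Let x ∈ ℝ^d and let φ ∈ C²_b(ℝ^d) satisfy 0 ≤ φ ≤ 1 and φ(x) = 0. Then for all u, v ∈ C²_b(ℝ^d): | I(u)(x) − I(v)(x) | ≤ K₀ · ( ‖(1−φ)·(u−v)‖_{C²} + ‖φ‖_{C²} · sup_{y ∈ spt(φ)} |u(y) − v(y)| ), where spt(φ) denotes the support of φ. -/

import Mathlib

open Metric Set

noncomputable section

abbrev Euc (d : ℕ) := EuclideanSpace ℝ (Fin d)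

variable {d : ℕ}

def supNorm (u : Euc d → ℝ) : ℝ := ⨆ x, |u x|

def gradSup (u : Euc d → ℝ) : ℝ := ⨆ x, ‖fderiv ℝ u x‖

def hessSup (u : Euc d → ℝ) : ℝ := ⨆ x, ‖iteratedFDeriv ℝ 2 u x‖

def C2Norm (u : Euc d → ℝ) : ℝ := supNorm u + gradSup u + hessSup u

def IsC2b (u : Euc d → ℝ) : Prop :=
  ContDiff ℝ 2 u ∧ ∃ M : ℝ, ∀ x, |u x| ≤ M ∧ ‖fderiv ℝ u x‖ ≤ M ∧ ‖iteratedFDeriv ℝ 2 u x‖ ≤ M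

def IsCb (f : Euc d → ℝ) : Prop := Continuous f ∧ ∃ M : ℝ, ∀ x, |f x| ≤ M

def GCP (dom : (Euc d → ℝ) → Prop) (I : (Euc d → ℝ) → Euc d → ℝ) : Prop :=
  ∀ u v, dom u → dom v → (∀ y, u y ≤ v y) → ∀ x, u x = v x → I u x ≤ I v x

def LipWith (K₀ : ℝ) (dom : (Euc d → ℝ) → Prop) (N : (Euc d → ℝ) → ℝ)
    (I : (Euc d → ℝ) → Euc d → ℝ) : Prop :=
  ∀ u v, dom u → dom v → ∀ x, |I u x - I v x| ≤ K₀ * N (fun y => u y - v y)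

/- ### Auxiliary lemmas -/

lemma norm_itf_one (f : Euc d → ℝ) (x : Euc d) :
    ‖iteratedFDeriv ℝ 1 f x‖ = ‖fderiv ℝ f x‖ := by
  rw [show (1 : ℕ) = 0 + 1 from rfl, ← norm_iteratedFDeriv_fderiv, norm_iteratedFDeriv_zero]

lemma IsC2b.contDiffNat {f : Euc d → ℝ} (hf : IsC2b f) : ContDiff ℝ (2 : ℕ) f := by
  exact_mod_cast hf.1

/-- A convenient bound: all iterated derivatives of order ≤ 2 bounded by a nonneg constant. -/
lemma IsC2b.bound {f : Euc d → ℝ} (hf : IsC2b f) :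
    ∃ M : ℝ, 0 ≤ M ∧ ∀ x, ‖iteratedFDeriv ℝ 0 f x‖ ≤ M ∧ ‖iteratedFDeriv ℝ 1 f x‖ ≤ M ∧
      ‖iteratedFDeriv ℝ 2 f x‖ ≤ M := by
  obtain ⟨M, hM⟩ := hf.2
  refine ⟨M, le_trans (abs_nonneg _) (hM 0).1, fun x => ?_⟩
  rw [norm_iteratedFDeriv_zero, norm_itf_one, Real.norm_eq_abs]
  exact ⟨(hM x).1, (hM x).2.1, (hM x).2.2⟩

lemma IsC2b.mul {f g : Euc d → ℝ} (hf : IsC2b f) (hg : IsC2b g) :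
    IsC2b (fun y => f y * g y) := by
  obtain ⟨Mf, hMf0, hMf⟩ := hf.bound
  obtain ⟨Mg, hMg0, hMg⟩ := hg.bound
  refine ⟨hf.1.mul hg.1, 4 * Mf * Mg, fun x => ?_⟩
  have key : ∀ n : ℕ, n ≤ 2 → ‖iteratedFDeriv ℝ n (fun y => f y * g y) x‖ ≤ 4 * Mf * Mg := by
    intro n hn
    have h := norm_iteratedFDeriv_mul_le (𝕜 := ℝ) (N := (2 : ℕ)) hf.contDiffNat hg.contDiffNat x
      (n := n) (by exact_mod_cast hn)
    refine h.trans ?_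
    have b1f := (hMf x).2.1; have b2f := (hMf x).2.2
    have b1g := (hMg x).2.1; have b2g := (hMg x).2.2
    have af : |f x| ≤ Mf := by
      have := (hMf x).1; rwa [norm_iteratedFDeriv_zero, Real.norm_eq_abs] at this
    have ag : |g x| ≤ Mg := by
      have := (hMg x).1; rwa [norm_iteratedFDeriv_zero, Real.norm_eq_abs] at this
    have f0 := (hMf x).1; have f1 := (hMf x).2.1; have f2 := (hMf x).2.2
    interval_cases n
    · simp only [Finset.sum_range_succ, Finset.sum_range_zero, Nat.choose_self, Nat.cast_one,
        zero_add, one_mul]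
      have g0 : ‖iteratedFDeriv ℝ (0 - 0) g x‖ ≤ Mg := (hMg x).1
      nlinarith [mul_le_mul f0 g0 (norm_nonneg _) hMf0, mul_nonneg hMf0 hMg0]
    · simp only [Finset.sum_range_succ, Finset.sum_range_zero, Nat.choose_self,
        Nat.choose_zero_right, Nat.cast_one, zero_add, one_mul]
      have g10 : ‖iteratedFDeriv ℝ (1 - 0) g x‖ ≤ Mg := (hMg x).2.1
      have g11 : ‖iteratedFDeriv ℝ (1 - 1) g x‖ ≤ Mg := (hMg x).1
      nlinarith [mul_le_mul f0 g10 (norm_nonneg _) hMf0, mul_le_mul f1 g11 (norm_nonneg _) hMf0,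
        mul_nonneg hMf0 hMg0]
    · simp only [Finset.sum_range_succ, Finset.sum_range_zero, Nat.choose_self,
        Nat.choose_zero_right, Nat.choose_one_right, Nat.cast_one, Nat.cast_ofNat,
        zero_add, one_mul]
      have g20 : ‖iteratedFDeriv ℝ (2 - 0) g x‖ ≤ Mg := (hMg x).2.2
      have g21 : ‖iteratedFDeriv ℝ (2 - 1) g x‖ ≤ Mg := (hMg x).2.1
      have g22 : ‖iteratedFDeriv ℝ (2 - 2) g x‖ ≤ Mg := (hMg x).1
      nlinarith [mul_le_mul f0 g20 (norm_nonneg _) hMf0, mul_le_mul f1 g21 (norm_nonneg _) hMf0,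
        mul_le_mul f2 g22 (norm_nonneg _) hMf0, mul_nonneg hMf0 hMg0]
  constructor
  · have := key 0 (by norm_num)
    rwa [norm_iteratedFDeriv_zero, Real.norm_eq_abs] at this
  constructor
  · have := key 1 (by norm_num)
    rwa [norm_itf_one] at this
  · exact key 2 le_rfl

lemma IsC2b.add {f g : Euc d → ℝ} (hf : IsC2b f) (hg : IsC2b g) :
    IsC2b (fun y => f y + g y) := by
  obtain ⟨Mf, hMf⟩ := hf.2
  obtain ⟨Mg, hMg⟩ := hg.2
  refine ⟨hf.1.add hg.1, Mf + Mg, fun x => ?_⟩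
  have hdf : DifferentiableAt ℝ f x := (hf.1.differentiable two_ne_zero).differentiableAt
  have hdg : DifferentiableAt ℝ g x := (hg.1.differentiable two_ne_zero).differentiableAt
  refine ⟨?_, ?_, ?_⟩
  · exact (abs_add_le _ _).trans (add_le_add (hMf x).1 (hMg x).1)
  · rw [fderiv_fun_add hdf hdg]
    exact (norm_add_le _ _).trans (add_le_add (hMf x).2.1 (hMg x).2.1)
  · rw [iteratedFDeriv_add_apply' (i := 2) hf.contDiffNat.contDiffAt hg.contDiffNat.contDiffAt]
    exact (norm_add_le _ _).trans (add_le_add (hMf x).2.2 (hMg x).2.2)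

lemma isC2b_const (c : ℝ) : IsC2b (fun _ : Euc d => c) := by
  refine ⟨contDiff_const, |c|, fun x => ?_⟩
  refine ⟨le_rfl, ?_, ?_⟩
  · rw [fderiv_const_apply]; simpa using abs_nonneg c
  · rw [iteratedFDeriv_const_of_ne (by norm_num)]; simpa using abs_nonneg c

lemma IsC2b.const_mul {f : Euc d → ℝ} (hf : IsC2b f) (c : ℝ) :
    IsC2b (fun y => c * f y) := (isC2b_const c).mul hf

lemma IsC2b.sub {f g : Euc d → ℝ} (hf : IsC2b f) (hg : IsC2b g) :
    IsC2b (fun y => f y - g y) := by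
  have : (fun y => f y - g y) = fun y => f y + (-1) * g y := by funext y; ring
  rw [this]
  exact hf.add (hg.const_mul (-1))

lemma supNorm_nonneg (f : Euc d → ℝ) : 0 ≤ supNorm f :=
  Real.iSup_nonneg fun _ => abs_nonneg _

lemma gradSup_nonneg (f : Euc d → ℝ) : 0 ≤ gradSup f :=
  Real.iSup_nonneg fun _ => norm_nonneg _

lemma hessSup_nonneg (f : Euc d → ℝ) : 0 ≤ hessSup f :=
  Real.iSup_nonneg fun _ => norm_nonneg _

lemma le_supNorm {f : Euc d → ℝ} (hf : IsC2b f) (x : Euc d) : |f x| ≤ supNorm f := by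
  obtain ⟨M, hM⟩ := hf.2
  exact le_ciSup ⟨M, by rintro r ⟨y, rfl⟩; exact (hM y).1⟩ x

lemma le_gradSup {f : Euc d → ℝ} (hf : IsC2b f) (x : Euc d) : ‖fderiv ℝ f x‖ ≤ gradSup f := by
  obtain ⟨M, hM⟩ := hf.2
  exact le_ciSup ⟨M, by rintro r ⟨y, rfl⟩; exact (hM y).2.1⟩ x

lemma le_hessSup {f : Euc d → ℝ} (hf : IsC2b f) (x : Euc d) :
    ‖iteratedFDeriv ℝ 2 f x‖ ≤ hessSup f := by
  obtain ⟨M, hM⟩ := hf.2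
  exact le_ciSup ⟨M, by rintro r ⟨y, rfl⟩; exact (hM y).2.2⟩ x

lemma C2Norm_nonneg (f : Euc d → ℝ) : 0 ≤ C2Norm f := by
  have := supNorm_nonneg f; have := gradSup_nonneg f; have := hessSup_nonneg f
  unfold C2Norm; linarith

lemma C2Norm_add_le {f g : Euc d → ℝ} (hf : IsC2b f) (hg : IsC2b g) :
    C2Norm (fun y => f y + g y) ≤ C2Norm f + C2Norm g := by
  have h1 : supNorm (fun y => f y + g y) ≤ supNorm f + supNorm g := by
    refine Real.iSup_le (fun y => ?_) (add_nonneg (supNorm_nonneg f) (supNorm_nonneg g))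
    exact (abs_add_le _ _).trans (add_le_add (le_supNorm hf y) (le_supNorm hg y))
  have h2 : gradSup (fun y => f y + g y) ≤ gradSup f + gradSup g := by
    refine Real.iSup_le (fun y => ?_) (add_nonneg (gradSup_nonneg f) (gradSup_nonneg g))
    rw [fderiv_fun_add ((hf.1.differentiable two_ne_zero).differentiableAt)
      ((hg.1.differentiable two_ne_zero).differentiableAt)]
    exact (norm_add_le _ _).trans (add_le_add (le_gradSup hf y) (le_gradSup hg y))
  have h3 : hessSup (fun y => f y + g y) ≤ hessSup f + hessSup g := by
    refine Real.iSup_le (fun y => ?_) (add_nonneg (hessSup_nonneg f) (hessSup_nonneg g))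
    rw [iteratedFDeriv_add_apply' (i := 2) hf.contDiffNat.contDiffAt hg.contDiffNat.contDiffAt]
    exact (norm_add_le _ _).trans (add_le_add (le_hessSup hf y) (le_hessSup hg y))
  unfold C2Norm; linarith

lemma C2Norm_const_mul_le {f : Euc d → ℝ} (hf : IsC2b f) (c : ℝ) :
    C2Norm (fun y => c * f y) ≤ |c| * C2Norm f := by
  have hc : 0 ≤ |c| := abs_nonneg c
  have hsmul : (fun y => c * f y) = c • f := by funext y; simp [smul_eq_mul]
  have h1 : supNorm (fun y => c * f y) ≤ |c| * supNorm f := by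
    refine Real.iSup_le (fun y => ?_) (mul_nonneg hc (supNorm_nonneg f))
    rw [abs_mul]
    exact mul_le_mul_of_nonneg_left (le_supNorm hf y) hc
  have h2 : gradSup (fun y => c * f y) ≤ |c| * gradSup f := by
    refine Real.iSup_le (fun y => ?_) (mul_nonneg hc (gradSup_nonneg f))
    rw [fderiv_const_mul ((hf.1.differentiable two_ne_zero).differentiableAt) c, norm_smul,
      Real.norm_eq_abs]
    exact mul_le_mul_of_nonneg_left (le_gradSup hf y) hc
  have h3 : hessSup (fun y => c * f y) ≤ |c| * hessSup f := by
    refine Real.iSup_le (fun y => ?_) (mul_nonneg hc (hessSup_nonneg f))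
    rw [hsmul, iteratedFDeriv_const_smul_apply hf.contDiffNat.contDiffAt, norm_smul, Real.norm_eq_abs]
    exact mul_le_mul_of_nonneg_left (le_hessSup hf y) hc
  unfold C2Norm; nlinarith [supNorm_nonneg f, gradSup_nonneg f, hessSup_nonneg f]

/-- splitting estimate for operators with the GCP, with a cutoff `φ`
vanishing at `x`:
`|I(u)(x) - I(v)(x)| ≤ K₀ ( ‖(1-φ)(u-v)‖_{C²} + ‖φ‖_{C²} sup_{spt φ}|u-v| )`. -/
theorem splitting_estimate (d : ℕ) (hd : 1 ≤ d) (K₀ : ℝ) (hK₀ : 0 ≤ K₀)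
    (I : (Euc d → ℝ) → Euc d → ℝ)
    (hmap : ∀ u, IsC2b u → IsCb (I u))
    (hLip : LipWith K₀ IsC2b C2Norm I)
    (hGCP : GCP IsC2b I)
    (x : Euc d) (φ : Euc d → ℝ) (hφ : IsC2b φ)
    (hφ01 : ∀ y, 0 ≤ φ y ∧ φ y ≤ 1) (hφx : φ x = 0)
    (u v : Euc d → ℝ) (hu : IsC2b u) (hv : IsC2b v) :
    |I u x - I v x| ≤
      K₀ * (C2Norm (fun y => (1 - φ y) * (u y - v y))
        + C2Norm φ * (⨆ y ∈ Function.support φ, |u y - v y|)) := by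
  set w : Euc d → ℝ := fun y => u y - v y with hw_def
  have hw : IsC2b w := hu.sub hv
  set M : ℝ := ⨆ y ∈ Function.support φ, |u y - v y| with hM_def
  set g : Euc d → ℝ := fun y => (1 - φ y) * (u y - v y) with hg_def
  have h1φ : IsC2b (fun y => 1 - φ y) := (isC2b_const 1).sub hφ
  have hg : IsC2b g := h1φ.mul hw
  -- basic facts about M
  obtain ⟨Mw, hMw⟩ := hw.2
  have hMw0 : 0 ≤ Mw := le_trans (abs_nonneg _) (hMw x).1
  have hFbdd : BddAbove (Set.range fun y => ⨆ (_ : y ∈ Function.support φ), |u y - v y|) := by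
    refine ⟨Mw, ?_⟩
    rintro r ⟨y, rfl⟩
    exact Real.iSup_le (fun _ => (hMw y).1) hMw0
  have hM0 : 0 ≤ M :=
    Real.iSup_nonneg fun y => Real.iSup_nonneg fun _ => abs_nonneg _
  have habsM : ∀ y, y ∈ Function.support φ → |u y - v y| ≤ M := by
    intro y hy
    have : |u y - v y| = ⨆ (_ : y ∈ Function.support φ), |u y - v y| := (ciSup_pos (f := fun _ => |u y - v y|) hy).symm
    rw [this]
    exact le_ciSup hFbdd y
  have hkey : ∀ y, φ y * (u y - v y) ≤ φ y * M ∧ φ y * (-M) ≤ φ y * (u y - v y) := by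
    intro y
    by_cases hy : φ y = 0
    · simp [hy]
    · have hy' : y ∈ Function.support φ := hy
      have h1 : u y - v y ≤ M := le_trans (le_abs_self _) (habsM y hy')
      have h2 : -M ≤ u y - v y := by
        have := neg_abs_le (u y - v y)
        have := habsM y hy'
        linarith
      exact ⟨mul_le_mul_of_nonneg_left h1 (hφ01 y).1,
        mul_le_mul_of_nonneg_left h2 (hφ01 y).1⟩
  -- barrier functions
  set hp : Euc d → ℝ := fun y => v y + g y + M * φ y with hp_def
  set hm : Euc d → ℝ := fun y => v y + g y + (-M) * φ y with hm_def
  have hhp : IsC2b hp := (hv.add hg).add (hφ.const_mul M)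
  have hhm : IsC2b hm := (hv.add hg).add (hφ.const_mul (-M))
  -- the common bound on the C² norm differences
  have hCb : ∀ c : ℝ, |c| ≤ M →
      C2Norm (fun y => g y + c * φ y) ≤
        C2Norm g + C2Norm φ * M := by
    intro c hc
    calc C2Norm (fun y => g y + c * φ y)
        ≤ C2Norm g + C2Norm (fun y => c * φ y) := C2Norm_add_le hg (hφ.const_mul c)
      _ ≤ C2Norm g + |c| * C2Norm φ := by
          have := C2Norm_const_mul_le hφ c; linarith
      _ ≤ C2Norm g + C2Norm φ * M := by
          have h := mul_le_mul_of_nonneg_right hc (C2Norm_nonneg φ)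
          nlinarith [C2Norm_nonneg φ]
  have habsM' : |M| ≤ M := by rw [abs_of_nonneg hM0]
  have habsM'' : |(-M)| ≤ M := by rw [abs_neg, abs_of_nonneg hM0]
  -- upper bound: I u x ≤ I hp x
  have hup : I u x ≤ I hp x := by
    refine hGCP u hp hu hhp (fun y => ?_) x ?_
    · have := (hkey y).1
      simp only [hp_def, hg_def]
      nlinarith [this]
    · simp only [hp_def, hg_def, hφx]; ring
  -- lower bound: I hm x ≤ I u x
  have hlow : I hm x ≤ I u x := by
    refine hGCP hm u hhm hu (fun y => ?_) x ?_
    · have := (hkey y).2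
      simp only [hm_def, hg_def]
      nlinarith [this]
    · simp only [hm_def, hg_def, hφx]; ring
  -- Lipschitz estimates
  have hLp : |I hp x - I v x| ≤ K₀ * (C2Norm g + C2Norm φ * M) := by
    have h := hLip hp v hhp hv x
    have heq : (fun y => hp y - v y) = fun y => g y + M * φ y := by
      funext y; simp only [hp_def]; ring
    rw [heq] at h
    exact h.trans (mul_le_mul_of_nonneg_left (hCb M habsM') hK₀)
  have hLm : |I hm x - I v x| ≤ K₀ * (C2Norm g + C2Norm φ * M) := by
    have h := hLip hm v hhm hv x
    have heq : (fun y => hm y - v y) = fun y => g y + (-M) * φ y := by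
      funext y; simp only [hm_def]; ring
    rw [heq] at h
    exact h.trans (mul_le_mul_of_nonneg_left (hCb (-M) habsM'') hK₀)
  rw [abs_le]
  have h1 := abs_le.1 hLp
  have h2 := abs_le.1 hLm
  constructor
  · nlinarith [h2.1, hlow]
  · nlinarith [h1.2, hup]

end
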